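/- Let m ≥ 1 be a natural number and define the sequence θ : ℕ → ℝ by θ_1 = 1/m and θ_{k+1} = (√(θ_k^4 + 4 θ_k^2) − θ_k^2)/2 for all k ≥ 1. Then for every k ≥ 1 one has the lower bound θ_k ≥ 1/(k − 1 + 2m). -/
import Mathlib


/-- For the ASBCDS step-size sequence θ with θ₁ = 1/m and
θ_{k+1} = (√(θ_k⁴ + 4θ_k²) − θ_k²)/2 (m ≥ 1), for every k ≥ 1 one has
θ_k ≥ 1/(k − 1 + 2m). -/
theorem asbcds_theta_lower_bound (m : ℕ) (hm : 1 ≤ m) (θ : ℕ → ℝ)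
    (hθ1 : θ 1 = 1 / m)
    (hθrec : ∀ k, 1 ≤ k →
      θ (k + 1) = (Real.sqrt (θ k ^ 4 + 4 * θ k ^ 2) - θ k ^ 2) / 2) :
    ∀ k, 1 ≤ k → θ k ≥ 1 / ((k : ℝ) - 1 + 2 * m) := by
  have hm' : (1 : ℝ) ≤ (m : ℝ) := by exact_mod_cast hm
  intro k hk
  induction k, hk using Nat.le_induction with
  | base =>
    rw [hθ1]
    have hmpos : (0 : ℝ) < m := by linarith
    rw [show ((1 : ℕ) : ℝ) - 1 + 2 * m = 2 * m by ring]
    rw [ge_iff_le, div_le_div_iff₀ (by linarith) hmpos]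
    linarith
  | succ k hk ih =>
    set c : ℝ := (k : ℝ) - 1 + 2 * m with hc
    have hk1 : (1 : ℝ) ≤ (k : ℝ) := by exact_mod_cast hk
    have hc2 : (2 : ℝ) ≤ c := by simp [hc]; linarith
    have hcpos : (0 : ℝ) < c := by linarith
    have hc1pos : (0 : ℝ) < c + 1 := by linarith
    set t : ℝ := θ k with ht
    have htc : 1 / c ≤ t := ih
    have htpos : 0 < t := lt_of_lt_of_le (by positivity) htc
    -- key: t^2 * (c * (c+1)) ≥ 1
    have hkey : 1 ≤ t ^ 2 * (c * (c + 1)) := by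
      have h1 : 1 / c ^ 2 ≤ t ^ 2 := by
        rw [show (1:ℝ) / c ^ 2 = (1/c)^2 by rw [div_pow]; norm_num]
        exact pow_le_pow_left₀ (by positivity) htc 2
      have h2 : 1 / c ^ 2 * (c * (c + 1)) ≤ t ^ 2 * (c * (c + 1)) := by
        apply mul_le_mul_of_nonneg_right h1; positivity
      have h3 : 1 ≤ 1 / c ^ 2 * (c * (c + 1)) := by
        rw [div_mul_eq_mul_div, le_div_iff₀ (by positivity)]
        nlinarith
      exact le_trans h3 h2
    -- sqrt bound
    have hs : t ^ 2 + 2 / (c + 1) ≤ Real.sqrt (t ^ 4 + 4 * t ^ 2) := by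
      have hsq : (t ^ 2 + 2 / (c + 1)) ^ 2 ≤ t ^ 4 + 4 * t ^ 2 := by
        have expand : (t ^ 2 + 2 / (c + 1)) ^ 2
            = t ^ 4 + 4 * t ^ 2 / (c + 1) + 4 / (c + 1) ^ 2 := by
          field_simp; ring
        rw [expand]
        -- need 4 t²/(c+1) + 4/(c+1)² ≤ 4 t², i.e. t² c (c+1) ≥ 1 after clearing
        rw [show t ^ 4 + 4 * t ^ 2 / (c + 1) + 4 / (c + 1) ^ 2
              = t ^ 4 + (4 * t ^ 2 * (c + 1) + 4) / (c + 1) ^ 2 by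
            field_simp; ring]
        have : (4 * t ^ 2 * (c + 1) + 4) / (c + 1) ^ 2 ≤ 4 * t ^ 2 := by
          rw [div_le_iff₀ (by positivity)]
          nlinarith
        linarith
      calc t ^ 2 + 2 / (c + 1)
          = Real.sqrt ((t ^ 2 + 2 / (c + 1)) ^ 2) := by
            rw [Real.sqrt_sq (by positivity)]
        _ ≤ Real.sqrt (t ^ 4 + 4 * t ^ 2) := Real.sqrt_le_sqrt hsq
    rw [hθrec k hk]
    have hcast : ((k + 1 : ℕ) : ℝ) - 1 + 2 * m = c + 1 := by push_cast; ring
    rw [hcast, ge_iff_le, ← ht]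
    have h4 : (2:ℝ) / (c + 1) = 2 * (1 / (c + 1)) := by ring
    linarith
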